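/- With f(λ,p) = −E_{u∼p}[r₁(u)] and g(λ,p) = −E_{u∼p}[r₂(u)] + λ·KL(p‖p_data), and penalty L_γ(λ,p) = f(λ,p) + γ(g(λ,p) − g*(λ)), the gradient of L_γ*(λ) = min_p L_γ(λ,p) with respect to λ equals γ·(KL(p_γ*(λ)‖p_data) − KL(p*(λ)‖p_data)), where p_γ*(λ) minimizes L_γ(λ,·) and p*(λ) minimizes g(λ,·). -/

import Mathlib

open MeasureTheory Real

section Aux

variable {Ω : Type*} [MeasurableSpace Ω]

lemma aux_integrable_exp_mul (μ : Measure Ω) [IsProbabilityMeasure μ]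
    {φ ψ : Ω → ℝ} (hφ : Measurable φ) (hψ : Measurable ψ)
    {B D : ℝ} (hB : ∀ u, |φ u| ≤ B) (hD : ∀ u, |ψ u| ≤ D)
    {l : ℝ} (hl : 0 < l) :
    Integrable (fun u => Real.exp (φ u / l) * ψ u) μ := by
  refine (integrable_const (Real.exp (B / l) * D)).mono'
    (((hφ.div_const l).exp.mul hψ).aestronglyMeasurable) ?_
  filter_upwards with u
  rw [Real.norm_eq_abs, abs_mul, abs_of_pos (Real.exp_pos _)]
  have h1 : Real.exp (φ u / l) ≤ Real.exp (B / l) := by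
    apply Real.exp_le_exp.2
    gcongr
    exact (le_abs_self _).trans (hB u)
  have h2 : |ψ u| ≤ D := hD u
  have h3 : (0:ℝ) ≤ |ψ u| := abs_nonneg _
  nlinarith [Real.exp_pos (φ u / l), Real.exp_pos (B / l)]

lemma aux_integrable_exp (μ : Measure Ω) [IsProbabilityMeasure μ]
    {φ : Ω → ℝ} (hφ : Measurable φ)
    {B : ℝ} (hB : ∀ u, |φ u| ≤ B) {l : ℝ} (hl : 0 < l) :
    Integrable (fun u => Real.exp (φ u / l)) μ := by
  refine (integrable_const (Real.exp (B / l))).mono'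
    ((hφ.div_const l).exp.aestronglyMeasurable) ?_
  filter_upwards with u
  rw [Real.norm_eq_abs, abs_of_pos (Real.exp_pos _)]
  apply Real.exp_le_exp.2
  gcongr
  exact (le_abs_self _).trans (hB u)

lemma aux_Z_pos (μ : Measure Ω) [IsProbabilityMeasure μ]
    {φ : Ω → ℝ} (hφ : Measurable φ)
    {B : ℝ} (hB : ∀ u, |φ u| ≤ B) {l : ℝ} (hl : 0 < l) :
    0 < ∫ u, Real.exp (φ u / l) ∂μ := by
  have h1 : Real.exp (-B / l) ≤ ∫ u, Real.exp (φ u / l) ∂μ := by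
    have : Real.exp (-B / l) = ∫ _u, Real.exp (-B / l) ∂μ := by simp
    rw [this]
    refine integral_mono (integrable_const _) (aux_integrable_exp μ hφ hB hl) ?_
    intro u
    apply Real.exp_le_exp.2
    gcongr
    exact neg_le_of_abs_le (hB u)
  exact lt_of_lt_of_le (Real.exp_pos _) h1

/-- The entropy identity: `∫ w log w = (∫ e^{φ/l} φ)/(l Z) − log Z` for `w = e^{φ/l}/Z`. -/
lemma aux_kl_eq (μ : Measure Ω) [IsProbabilityMeasure μ]
    {φ : Ω → ℝ} (hφ : Measurable φ)
    {B : ℝ} (hB : ∀ u, |φ u| ≤ B) {l : ℝ} (hl : 0 < l) :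
    (∫ u, (Real.exp (φ u / l) / ∫ v, Real.exp (φ v / l) ∂μ)
        * Real.log (Real.exp (φ u / l) / ∫ v, Real.exp (φ v / l) ∂μ) ∂μ)
      = (∫ u, Real.exp (φ u / l) * φ u ∂μ) / (l * ∫ v, Real.exp (φ v / l) ∂μ)
        - Real.log (∫ v, Real.exp (φ v / l) ∂μ) := by
  set Z := ∫ v, Real.exp (φ v / l) ∂μ with hZ
  have hZpos : 0 < Z := aux_Z_pos μ hφ hB hl
  have hpt : ∀ u, (Real.exp (φ u / l) / Z) * Real.log (Real.exp (φ u / l) / Z)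
      = (1 / (l * Z)) * (Real.exp (φ u / l) * φ u)
        - (Real.log Z / Z) * Real.exp (φ u / l) := by
    intro u
    rw [Real.log_div (Real.exp_ne_zero _) hZpos.ne', Real.log_exp]
    field_simp
  rw [integral_congr_ae (Filter.Eventually.of_forall hpt)]
  rw [integral_sub
    ((aux_integrable_exp_mul μ hφ hφ hB hB hl).const_mul _)
    ((aux_integrable_exp μ hφ hB hl).const_mul _)]
  rw [integral_const_mul, integral_const_mul]
  rw [← hZ]
  have hlog : Real.log Z / Z * Z = Real.log Z := by field_simp
  rw [hlog]
  field_simp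

/-- Integral against the tilted density: `∫ (e^{φ/l}/Z) ψ = (∫ e^{φ/l} ψ)/Z`. -/
lemma aux_tilted_integral (μ : Measure Ω) [IsProbabilityMeasure μ]
    (φ ψ : Ω → ℝ) (l : ℝ) :
    (∫ u, (Real.exp (φ u / l) / ∫ v, Real.exp (φ v / l) ∂μ) * ψ u ∂μ)
      = (∫ u, Real.exp (φ u / l) * ψ u ∂μ) / (∫ v, Real.exp (φ v / l) ∂μ) := by
  rw [← integral_div]
  congr 1
  funext u
  ring

/-- `−∫ w φ + l ∫ w log w = −(l log Z)` for the tilted density `w = e^{φ/l}/Z`. -/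
lemma aux_value_eq (μ : Measure Ω) [IsProbabilityMeasure μ]
    {φ : Ω → ℝ} (hφ : Measurable φ)
    {B : ℝ} (hB : ∀ u, |φ u| ≤ B) {l : ℝ} (hl : 0 < l) :
    -(∫ u, (Real.exp (φ u / l) / ∫ v, Real.exp (φ v / l) ∂μ) * φ u ∂μ)
      + l * (∫ u, (Real.exp (φ u / l) / ∫ v, Real.exp (φ v / l) ∂μ)
          * Real.log (Real.exp (φ u / l) / ∫ v, Real.exp (φ v / l) ∂μ) ∂μ)
      = -(l * Real.log (∫ v, Real.exp (φ v / l) ∂μ)) := by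
  rw [aux_kl_eq μ hφ hB hl, aux_tilted_integral μ φ φ l]
  have hZpos : 0 < ∫ v, Real.exp (φ v / l) ∂μ := aux_Z_pos μ hφ hB hl
  field_simp
  ring

/-- Derivative of `l ↦ l·log ∫ e^{φ/l}` is minus the entropy of the tilted density. -/
lemma aux_hasDerivAt (μ : Measure Ω) [IsProbabilityMeasure μ]
    {φ : Ω → ℝ} (hφ : Measurable φ)
    {B : ℝ} (hB : ∀ u, |φ u| ≤ B) {l : ℝ} (hl : 0 < l) :
    HasDerivAt (fun t => t * Real.log (∫ u, Real.exp (φ u / t) ∂μ))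
      (-(∫ u, (Real.exp (φ u / l) / ∫ v, Real.exp (φ v / l) ∂μ)
          * Real.log (Real.exp (φ u / l) / ∫ v, Real.exp (φ v / l) ∂μ) ∂μ)) l := by
  have hne : Nonempty Ω := by
    by_contra h
    rw [not_nonempty_iff] at h
    have h1 := measure_univ (μ := μ)
    rw [Set.univ_eq_empty_iff.2 h, measure_empty] at h1
    exact zero_ne_one h1
  have hB0 : 0 ≤ B := (abs_nonneg _).trans (hB hne.some)
  have hε : (0:ℝ) < l / 2 := by linarith
  have hZder : HasDerivAt (fun t => ∫ u, Real.exp (φ u / t) ∂μ)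
      (∫ u, Real.exp (φ u / l) * (-(φ u) / l ^ 2) ∂μ) l := by
    have key := hasDerivAt_integral_of_dominated_loc_of_deriv_le (μ := μ)
      (F := fun t u => Real.exp (φ u / t))
      (F' := fun t u => Real.exp (φ u / t) * (-(φ u) / t ^ 2))
      (x₀ := l) (s := Metric.ball l (l / 2))
      (bound := fun _ => Real.exp (B / (l / 2)) * (B / (l / 2) ^ 2))
      (Metric.ball_mem_nhds l hε)
      (Filter.Eventually.of_forall fun t => ((hφ.div_const t).exp).aestronglyMeasurable)
      (aux_integrable_exp μ hφ hB hl)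
      (((hφ.div_const l).exp.mul (hφ.neg.div_const (l ^ 2))).aestronglyMeasurable)
      ?_ (integrable_const _) ?_
    · exact key.2
    · filter_upwards with u
      intro t ht
      have ht2 : l / 2 < t := by
        have h := Metric.mem_ball.1 ht
        rw [Real.dist_eq] at h
        have := abs_lt.1 h
        linarith [this.1]
      have ht0 : 0 < t := lt_trans hε ht2
      rw [Real.norm_eq_abs, abs_mul, abs_of_pos (Real.exp_pos _), abs_div, abs_neg,
        abs_of_pos (pow_pos ht0 2)]
      have h1 : Real.exp (φ u / t) ≤ Real.exp (B / (l / 2)) := by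
        apply Real.exp_le_exp.2
        calc φ u / t ≤ |φ u| / t := by gcongr; exact le_abs_self _
        _ ≤ B / t := by gcongr; exact hB u
        _ ≤ B / (l / 2) := by gcongr
      have h2 : |φ u| / t ^ 2 ≤ B / (l / 2) ^ 2 := by
        gcongr
        exact hB u
      have h3 : (0:ℝ) ≤ |φ u| / t ^ 2 := by positivity
      exact mul_le_mul h1 h2 h3 (Real.exp_pos _).le
    · filter_upwards with u
      intro t ht
      have ht2 : l / 2 < t := by
        have h := Metric.mem_ball.1 ht
        rw [Real.dist_eq] at h
        have := abs_lt.1 h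
        linarith [this.1]
      have ht0 : t ≠ 0 := (lt_trans hε ht2).ne'
      have h1 : HasDerivAt (fun t : ℝ => Real.exp (φ u * t⁻¹))
          (Real.exp (φ u * t⁻¹) * (φ u * -(t ^ 2)⁻¹)) t :=
        ((hasDerivAt_inv ht0).const_mul (φ u)).exp
      simp only [div_eq_mul_inv]
      exact h1.congr_deriv (by ring)
  have hZpos : 0 < ∫ u, Real.exp (φ u / l) ∂μ := aux_Z_pos μ hφ hB hl
  have hlog := hZder.log hZpos.ne'
  have hmain := (hasDerivAt_id l).mul hlog
  have hI : (∫ u, Real.exp (φ u / l) * (-(φ u) / l ^ 2) ∂μ)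
      = (-(1 / l ^ 2)) * ∫ u, Real.exp (φ u / l) * φ u ∂μ := by
    rw [← integral_const_mul]
    congr 1
    funext u
    ring
  have heq : 1 * Real.log (∫ u, Real.exp (φ u / l) ∂μ)
      + id l * ((∫ u, Real.exp (φ u / l) * (-(φ u) / l ^ 2) ∂μ) / (∫ u, Real.exp (φ u / l) ∂μ))
      = -(∫ u, (Real.exp (φ u / l) / ∫ v, Real.exp (φ v / l) ∂μ)
          * Real.log (Real.exp (φ u / l) / ∫ v, Real.exp (φ v / l) ∂μ) ∂μ) := by
    rw [aux_kl_eq μ hφ hB hl, hI]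
    simp only [id_eq]
    field_simp
    ring
  rw [← heq]
  exact hmain

end Aux

/-- With `f(λ,p) = −E_{u∼p}[r₁]`, `g(λ,p) = −E_{u∼p}[r₂] + λ·KL(p‖pdata)`
and penalty `L_γ(λ,p) = f(λ,p) + γ(g(λ,p) − g*(λ))`, where `g*(λ) = min_p g(λ,p)` is attained
at the tilted density `p*(λ) ∝ pdata·exp(r₂/λ)` and `L_γ(λ,·)` is minimized at
`p_γ*(λ) ∝ pdata·exp((r₁/γ + r₂)/λ)`, the derivative of `L_γ*(λ) = min_p L_γ(λ,p)`
with respect to `λ` equals `γ·(KL(p_γ*(λ)‖pdata) − KL(p*(λ)‖pdata))`. -/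
theorem deriv_penalty_value_eq_kl_difference {Ω : Type*} [MeasurableSpace Ω]
    (pdata : Measure Ω) [IsProbabilityMeasure pdata]
    (r₁ r₂ : Ω → ℝ) (hr₁ : Measurable r₁) (hr₂ : Measurable r₂)
    (C : ℝ) (hrC₁ : ∀ u, |r₁ u| ≤ C) (hrC₂ : ∀ u, |r₂ u| ≤ C)
    (γ : ℝ) (hγ : 0 < γ) (lam : ℝ) (hlam : 0 < lam)
    -- the tilted minimizer `p*(λ)` of the lower level `g(λ,·)`
    (wstar : ℝ → Ω → ℝ)
    (hwstar : ∀ l u, wstar l u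
      = Real.exp (r₂ u / l) / ∫ v, Real.exp (r₂ v / l) ∂pdata)
    -- the tilted minimizer `p_γ*(λ)` of the penalty `L_γ(λ,·)`
    (wγ : ℝ → Ω → ℝ)
    (hwγ : ∀ l u, wγ l u
      = Real.exp ((r₁ u / γ + r₂ u) / l) / ∫ v, Real.exp ((r₁ v / γ + r₂ v) / l) ∂pdata)
    -- KL divergence to `pdata` of the density `w · pdata`
    (KL : (Ω → ℝ) → ℝ) (hKL : ∀ w, KL w = ∫ u, w u * Real.log (w u) ∂pdata)
    -- the lower-level optimal value `g*(λ)`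
    (gstar : ℝ → ℝ)
    (hgstar : ∀ l, gstar l = -(∫ u, wstar l u * r₂ u ∂pdata) + l * KL (wstar l))
    -- the penalty optimal value `L_γ*(λ) = min_p L_γ(λ,p)`
    (Lstar : ℝ → ℝ)
    (hLstar : ∀ l, Lstar l
      = -(∫ u, wγ l u * r₁ u ∂pdata)
        + γ * ((-(∫ u, wγ l u * r₂ u ∂pdata) + l * KL (wγ l)) - gstar l)) :
    HasDerivAt Lstar (γ * (KL (wγ lam) - KL (wstar lam))) lam := by
  have hφγm : Measurable (fun u => r₁ u / γ + r₂ u) := (hr₁.div_const γ).add hr₂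
  have hφγB : ∀ u, |r₁ u / γ + r₂ u| ≤ C / γ + C := by
    intro u
    calc |r₁ u / γ + r₂ u| ≤ |r₁ u / γ| + |r₂ u| := abs_add_le _ _
    _ ≤ C / γ + C := by
      refine add_le_add ?_ (hrC₂ u)
      rw [abs_div, abs_of_pos hγ]
      gcongr
      exact hrC₁ u
  have hg : ∀ l : ℝ, 0 < l →
      gstar l = -(l * Real.log (∫ v, Real.exp (r₂ v / l) ∂pdata)) := by
    intro l hl
    rw [hgstar, hKL]
    simp only [hwstar]
    exact aux_value_eq pdata hr₂ hrC₂ hl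
  have hL : ∀ l : ℝ, 0 < l → Lstar l =
      γ * (l * Real.log (∫ v, Real.exp (r₂ v / l) ∂pdata))
      - γ * (l * Real.log (∫ v, Real.exp ((r₁ v / γ + r₂ v) / l) ∂pdata)) := by
    intro l hl
    have h1 : -(∫ u, (Real.exp ((r₁ u / γ + r₂ u) / l)
            / ∫ v, Real.exp ((r₁ v / γ + r₂ v) / l) ∂pdata) * (r₁ u / γ + r₂ u) ∂pdata)
        + l * (∫ u, (Real.exp ((r₁ u / γ + r₂ u) / l)
            / ∫ v, Real.exp ((r₁ v / γ + r₂ v) / l) ∂pdata)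
          * Real.log (Real.exp ((r₁ u / γ + r₂ u) / l)
            / ∫ v, Real.exp ((r₁ v / γ + r₂ v) / l) ∂pdata) ∂pdata)
        = -(l * Real.log (∫ v, Real.exp ((r₁ v / γ + r₂ v) / l) ∂pdata)) :=
      aux_value_eq pdata hφγm hφγB hl
    have hi1 : Integrable (fun u => ((Real.exp ((r₁ u / γ + r₂ u) / l)
        / ∫ v, Real.exp ((r₁ v / γ + r₂ v) / l) ∂pdata) * r₁ u) / γ) pdata := by
      have hI := aux_integrable_exp_mul pdata hφγm hr₁ hφγB hrC₁ hl
      have hfe : (fun u => ((Real.exp ((r₁ u / γ + r₂ u) / l)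
          / ∫ v, Real.exp ((r₁ v / γ + r₂ v) / l) ∂pdata) * r₁ u) / γ)
          = fun u => (Real.exp ((r₁ u / γ + r₂ u) / l) * r₁ u)
            * ((∫ v, Real.exp ((r₁ v / γ + r₂ v) / l) ∂pdata)⁻¹ * γ⁻¹) := by
        funext u; ring
      rw [hfe]
      exact hI.mul_const _
    have hi2 : Integrable (fun u => (Real.exp ((r₁ u / γ + r₂ u) / l)
        / ∫ v, Real.exp ((r₁ v / γ + r₂ v) / l) ∂pdata) * r₂ u) pdata := by
      have hI := aux_integrable_exp_mul pdata hφγm hr₂ hφγB hrC₂ hl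
      have hfe : (fun u => (Real.exp ((r₁ u / γ + r₂ u) / l)
          / ∫ v, Real.exp ((r₁ v / γ + r₂ v) / l) ∂pdata) * r₂ u)
          = fun u => (Real.exp ((r₁ u / γ + r₂ u) / l) * r₂ u)
            * (∫ v, Real.exp ((r₁ v / γ + r₂ v) / l) ∂pdata)⁻¹ := by
        funext u; ring
      rw [hfe]
      exact hI.mul_const _
    have h2' : (∫ u, (Real.exp ((r₁ u / γ + r₂ u) / l)
            / ∫ v, Real.exp ((r₁ v / γ + r₂ v) / l) ∂pdata) * (r₁ u / γ + r₂ u) ∂pdata)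
        = (∫ u, (Real.exp ((r₁ u / γ + r₂ u) / l)
            / ∫ v, Real.exp ((r₁ v / γ + r₂ v) / l) ∂pdata) * r₁ u ∂pdata) / γ
          + (∫ u, (Real.exp ((r₁ u / γ + r₂ u) / l)
            / ∫ v, Real.exp ((r₁ v / γ + r₂ v) / l) ∂pdata) * r₂ u ∂pdata) := by
      have hptw : (fun u => (Real.exp ((r₁ u / γ + r₂ u) / l)
            / ∫ v, Real.exp ((r₁ v / γ + r₂ v) / l) ∂pdata) * (r₁ u / γ + r₂ u))
          = fun u => ((Real.exp ((r₁ u / γ + r₂ u) / l)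
            / ∫ v, Real.exp ((r₁ v / γ + r₂ v) / l) ∂pdata) * r₁ u) / γ
            + (Real.exp ((r₁ u / γ + r₂ u) / l)
            / ∫ v, Real.exp ((r₁ v / γ + r₂ v) / l) ∂pdata) * r₂ u := by
        funext u; ring
      rw [hptw, integral_add hi1 hi2, integral_div]
    have h2 : γ * (∫ u, (Real.exp ((r₁ u / γ + r₂ u) / l)
            / ∫ v, Real.exp ((r₁ v / γ + r₂ v) / l) ∂pdata) * (r₁ u / γ + r₂ u) ∂pdata)
        = (∫ u, (Real.exp ((r₁ u / γ + r₂ u) / l)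
            / ∫ v, Real.exp ((r₁ v / γ + r₂ v) / l) ∂pdata) * r₁ u ∂pdata)
          + γ * (∫ u, (Real.exp ((r₁ u / γ + r₂ u) / l)
            / ∫ v, Real.exp ((r₁ v / γ + r₂ v) / l) ∂pdata) * r₂ u ∂pdata) := by
      rw [h2']
      field_simp
    rw [hLstar, hKL, hg l hl]
    simp only [hwγ]
    linear_combination γ * h1 + h2
  have hev : Lstar =ᶠ[nhds lam] fun l =>
      γ * (l * Real.log (∫ v, Real.exp (r₂ v / l) ∂pdata))
      - γ * (l * Real.log (∫ v, Real.exp ((r₁ v / γ + r₂ v) / l) ∂pdata)) := by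
    filter_upwards [eventually_gt_nhds hlam] with l hl
    exact hL l hl
  have hd2 : HasDerivAt (fun t => t * Real.log (∫ v, Real.exp (r₂ v / t) ∂pdata))
      (-(KL (wstar lam))) lam := by
    have hk : KL (wstar lam)
        = ∫ u, (Real.exp (r₂ u / lam) / ∫ v, Real.exp (r₂ v / lam) ∂pdata)
          * Real.log (Real.exp (r₂ u / lam) / ∫ v, Real.exp (r₂ v / lam) ∂pdata) ∂pdata := by
      rw [hKL]
      simp only [hwstar]
    rw [hk]
    exact aux_hasDerivAt pdata hr₂ hrC₂ hlam
  have hdγ : HasDerivAt (fun t => t * Real.log (∫ v, Real.exp ((r₁ v / γ + r₂ v) / t) ∂pdata))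
      (-(KL (wγ lam))) lam := by
    have hk : KL (wγ lam)
        = ∫ u, (Real.exp ((r₁ u / γ + r₂ u) / lam)
            / ∫ v, Real.exp ((r₁ v / γ + r₂ v) / lam) ∂pdata)
          * Real.log (Real.exp ((r₁ u / γ + r₂ u) / lam)
            / ∫ v, Real.exp ((r₁ v / γ + r₂ v) / lam) ∂pdata) ∂pdata := by
      rw [hKL]
      simp only [hwγ]
    rw [hk]
    exact aux_hasDerivAt pdata hφγm hφγB hlam
  have hcomb := (hd2.const_mul γ).sub (hdγ.const_mul γ)
  have hfinal : HasDerivAt (fun l =>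
      γ * (l * Real.log (∫ v, Real.exp (r₂ v / l) ∂pdata))
      - γ * (l * Real.log (∫ v, Real.exp ((r₁ v / γ + r₂ v) / l) ∂pdata)))
      (γ * (KL (wγ lam) - KL (wstar lam))) lam := by
    exact hcomb.congr_deriv (by ring)
  exact hfinal.congr_of_eventuallyEq hev
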